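/- Let X ⊂ ℝⁿ be a regular convex set, f a projectively self-concordant barrier on X with f''(x) − f'(x)f'(x)ᵀ ≻ 0 and satisfying ⟨f'(x), y − x⟩ < 1 for all x, y ∈ int X. The map Φ(x) = −f'(x)/(1 + ⟨f'(x), x⟩) is injective on the set S = { x ∈ int X : 1 + ⟨f'(x), x⟩ > 0 }. -/

import Mathlib

open Filter

variable {E : Type*} [NormedAddCommGroup E] [NormedSpace ℝ E]

/-- A regular convex set: closed, convex, with nonempty interior, containing no lines. -/
def IsRegularConvex (X : Set E) : Prop :=
  IsClosed X ∧ Convex ℝ X ∧ (interior X).Nonempty ∧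
    ∀ x d : E, d ≠ 0 → ¬ (∀ t : ℝ, x + t • d ∈ X)

/-- Affine metric `G(x)[h,h] = f''(x)[h,h] - (f'(x)[h])²`. -/
noncomputable def affMetric (f : E → ℝ) (x h : E) : ℝ :=
  iteratedFDeriv ℝ 2 f x (fun _ => h) - (fderiv ℝ f x h)^2

/-- Cubic form `C(x)[h,h,h]`. -/
noncomputable def cubicForm (f : E → ℝ) (x h : E) : ℝ :=
  iteratedFDeriv ℝ 3 f x (fun _ => h)
    - 6 * iteratedFDeriv ℝ 2 f x (fun _ => h) * fderiv ℝ f x h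
    + 4 * (fderiv ℝ f x h)^3

/-- Projectively self-concordant barrier with parameter γ on X. -/
def IsPSCBarrier (X : Set E) (f : E → ℝ) (γ : ℝ) : Prop :=
  ContDiffOn ℝ 3 f (interior X) ∧
  (∀ x ∈ interior X, ∀ h : E, h ≠ 0 → 0 < affMetric f x h) ∧
  (∀ x ∈ frontier X, Tendsto f (nhdsWithin x (interior X)) atTop) ∧
  (∀ x ∈ interior X, ∀ h : E, |cubicForm f x h| ≤ 2 * γ * (affMetric f x h) ^ ((3:ℝ)/2))

/-- `σ_x(h) = inf { 1/t : t > 0, x + t•h ∈ X }`. -/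
noncomputable def sigmaDist (X : Set E) (x h : E) : ℝ :=
  sInf {r : ℝ | ∃ t : ℝ, 0 < t ∧ x + t • h ∈ X ∧ r = 1/t}

lemma sign_right {F : ℝ → ℝ} {t c : ℝ} (h : HasDerivAt F c t) (h0 : F t = 0)
    (hc : 0 < c) : ∀ᶠ s in nhdsWithin t (Set.Ioi t), 0 < F s := by
  have hs : Tendsto (slope F t) (nhdsWithin t {t}ᶜ) (nhds c) :=
    hasDerivAt_iff_tendsto_slope.mp h
  have h2 : ∀ᶠ s in nhdsWithin t {t}ᶜ, 0 < slope F t s := hs.eventually_const_lt hc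
  have h3 : ∀ᶠ s in nhdsWithin t (Set.Ioi t), 0 < slope F t s :=
    h2.filter_mono (nhdsWithin_mono t (fun s hs => ne_of_gt hs))
  filter_upwards [h3, self_mem_nhdsWithin] with s hsl hst
  have : slope F t s = F s / (s - t) := by
    simp [slope_def_field, h0]
  rw [this] at hsl
  have hst' : 0 < s - t := sub_pos.mpr hst
  have := mul_pos hsl hst'
  rwa [div_mul_cancel₀] at this
  exact ne_of_gt hst'

lemma sign_left {F : ℝ → ℝ} {t c : ℝ} (h : HasDerivAt F c t) (h0 : F t = 0)
    (hc : 0 < c) : ∀ᶠ s in nhdsWithin t (Set.Iio t), F s < 0 := by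
  have hs : Tendsto (slope F t) (nhdsWithin t {t}ᶜ) (nhds c) :=
    hasDerivAt_iff_tendsto_slope.mp h
  have h2 : ∀ᶠ s in nhdsWithin t {t}ᶜ, 0 < slope F t s := hs.eventually_const_lt hc
  have h3 : ∀ᶠ s in nhdsWithin t (Set.Iio t), 0 < slope F t s :=
    h2.filter_mono (nhdsWithin_mono t (fun s hs => ne_of_lt hs))
  filter_upwards [h3, self_mem_nhdsWithin] with s hsl hst
  have hd : slope F t s = F s / (s - t) := by
    simp [slope_def_field, h0]
  rw [hd] at hsl
  have hst' : s - t < 0 := sub_neg.mpr hst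
  nlinarith [div_mul_cancel₀ (F s) (ne_of_lt hst')]

lemma no_two_crit {F G : ℝ → ℝ}
    (hd : ∀ t ∈ Set.Icc (0:ℝ) 1, HasDerivAt F (G t) t)
    (h0 : F 0 = 0) (h1 : F 1 = 0)
    (hG : ∀ t ∈ Set.Icc (0:ℝ) 1, F t = 0 → 0 < G t) : False := by
  have hG0 : 0 < G 0 := hG 0 (by norm_num) h0
  have hpos := sign_right (hd 0 (by norm_num)) h0 hG0
  obtain ⟨δ, hδ0, hδsub⟩ := mem_nhdsGT_iff_exists_Ioo_subset.mp hpos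
  have hδ0' : (0:ℝ) < δ := hδ0
  -- δ ≤ 1
  have hδ1 : δ ≤ 1 := by
    by_contra hcon
    have : (1:ℝ) ∈ Set.Ioo 0 δ := ⟨one_pos, lt_of_not_ge hcon⟩
    have := hδsub this
    simp only [Set.mem_setOf_eq] at this
    linarith [this, h1.ge]
  set T : Set ℝ := Set.Icc (δ/2) 1 ∩ F ⁻¹' (Set.Iic 0) with hT
  have hcont : ContinuousOn F (Set.Icc (δ/2) 1) := fun t ht =>
    ((hd t ⟨le_trans (by linarith) ht.1, ht.2⟩).continuousAt).continuousWithinAt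
  have hTclosed : IsClosed T :=
    hcont.preimage_isClosed_of_isClosed isClosed_Icc (isClosed_Iic (a := (0:ℝ)))
  have hTne : T.Nonempty := ⟨1, ⟨by constructor <;> linarith, le_of_eq h1⟩⟩
  have hTbdd : BddBelow T := ⟨δ/2, fun t ht => ht.1.1⟩
  set t₀ := sInf T with ht₀
  have ht₀T : t₀ ∈ T := hTclosed.csInf_mem hTne hTbdd
  have ht₀pos : 0 < t₀ := lt_of_lt_of_le (by linarith) ht₀T.1.1
  have ht₀le : t₀ ≤ 1 := ht₀T.1.2
  have hFposlt : ∀ s, 0 < s → s < t₀ → 0 < F s := by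
    intro s hs0 hst
    by_cases hsd : s < δ
    · exact hδsub ⟨hs0, hsd⟩
    · push_neg at hsd
      by_contra hcon
      push_neg at hcon
      have : s ∈ T := ⟨⟨by linarith, by linarith⟩, hcon⟩
      exact absurd (csInf_le hTbdd this) (not_le.mpr hst)
  -- F t₀ ≥ 0 by left limit
  have hmemIcc : t₀ ∈ Set.Icc (0:ℝ) 1 := ⟨le_of_lt ht₀pos, ht₀le⟩
  have hFt₀0 : F t₀ = 0 := by
    have hc : ContinuousAt F t₀ := (hd t₀ hmemIcc).continuousAt
    have htend : Tendsto F (nhdsWithin t₀ (Set.Iio t₀)) (nhds (F t₀)) :=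
      hc.continuousWithinAt.tendsto
    have hev : ∀ᶠ s in nhdsWithin t₀ (Set.Iio t₀), 0 ≤ F s := by
      filter_upwards [Ioo_mem_nhdsLT ht₀pos] with s hs
      exact le_of_lt (hFposlt s hs.1 hs.2)
    have : 0 ≤ F t₀ := ge_of_tendsto htend hev
    exact le_antisymm ht₀T.2 this
  have hGt₀ : 0 < G t₀ := hG t₀ hmemIcc hFt₀0
  have hneg := sign_left (hd t₀ hmemIcc) hFt₀0 hGt₀
  have hev2 : ∀ᶠ s in nhdsWithin t₀ (Set.Iio t₀), (0:ℝ) < F s := by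
    filter_upwards [Ioo_mem_nhdsLT ht₀pos] with s hs
    exact hFposlt s hs.1 hs.2
  obtain ⟨s, hs1, hs2⟩ := (hneg.and hev2).exists
  linarith

theorem stmt_14 {n : ℕ} (X : Set (EuclideanSpace ℝ (Fin n)))
    (hX : IsRegularConvex X) (γ : ℝ)
    (f : EuclideanSpace ℝ (Fin n) → ℝ) (hf : IsPSCBarrier X f γ)
    (hgrad : ∀ x ∈ interior X, ∀ y ∈ interior X, (inner ℝ (gradient f x) (y - x) : ℝ) < 1) :
    Set.InjOn (fun x => -(1 + (inner ℝ (gradient f x) x : ℝ))⁻¹ • gradient f x)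
      {x ∈ interior X | 0 < 1 + (inner ℝ (gradient f x) x : ℝ)} := by
  intro x hx y hy hxyeq
  by_contra hxy
  -- notation
  set g : EuclideanSpace ℝ (Fin n) → EuclideanSpace ℝ (Fin n) := gradient f with hg
  have hinner : ∀ z d : EuclideanSpace ℝ (Fin n), (inner ℝ (g z) d : ℝ) = fderiv ℝ f z d := by
    intro z d
    simp only [hg, gradient]
    exact InnerProductSpace.toDual_symm_apply
  obtain ⟨hxU, hcx⟩ := hx
  obtain ⟨hyU, hcy⟩ := hy
  set cx : ℝ := 1 + (inner ℝ (g x) x : ℝ) with hcxdef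
  set cy : ℝ := 1 + (inner ℝ (g y) y : ℝ) with hcydef
  have hcx0 : cx ≠ 0 := ne_of_gt hcx
  have hcy0 : cy ≠ 0 := ne_of_gt hcy
  set p : EuclideanSpace ℝ (Fin n) := -cx⁻¹ • g x with hpdef
  have hp' : p = -cy⁻¹ • g y := hxyeq
  set d : EuclideanSpace ℝ (Fin n) := y - x with hd
  have hdne : d ≠ 0 := sub_ne_zero.mpr (Ne.symm hxy)
  set U : Set (EuclideanSpace ℝ (Fin n)) := interior X with hU
  have hUopen : IsOpen U := isOpen_interior
  have hUconv : Convex ℝ U := hX.2.1.interior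
  set γ' : ℝ → EuclideanSpace ℝ (Fin n) := fun t => x + t • d with hγ'
  have hγmem : ∀ t ∈ Set.Icc (0:ℝ) 1, γ' t ∈ U := fun t ht =>
    hUconv.add_smul_sub_mem hxU hyU ht
  set B : ℝ := (inner ℝ p d : ℝ) with hBdef
  set A : ℝ → ℝ := fun t => (1 + (inner ℝ p x : ℝ)) + t * B with hAdef
  have hAval : ∀ t, A t = 1 + (inner ℝ p (γ' t) : ℝ) := by
    intro t
    simp only [hAdef, hγ', inner_add_right, real_inner_smul_right]
    ring
  have hpx : (inner ℝ p x : ℝ) = -cx⁻¹ * (inner ℝ (g x) x : ℝ) := by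
    simp only [hpdef, real_inner_smul_left]
  have hA0 : A 0 = cx⁻¹ := by
    have hxx : (inner ℝ (g x) x : ℝ) = cx - 1 := by rw [hcxdef]; ring
    simp only [hAdef, hpx, hxx, zero_mul, add_zero]
    field_simp; ring
  have hpy : (inner ℝ p y : ℝ) = -cy⁻¹ * (inner ℝ (g y) y : ℝ) := by
    rw [hp']; simp only [real_inner_smul_left]
  have hA1 : A 1 = cy⁻¹ := by
    have : γ' 1 = y := by simp [hγ', hd]
    have hyy : (inner ℝ (g y) y : ℝ) = cy - 1 := by rw [hcydef]; ring
    rw [show A 1 = 1 + (inner ℝ p (γ' 1) : ℝ) from hAval 1, this, hpy, hyy]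
    field_simp; ring
  have hApos : ∀ t ∈ Set.Icc (0:ℝ) 1, 0 < A t := by
    intro t ht
    have hcomb : A t = (1 - t) * A 0 + t * A 1 := by simp only [hAdef]; ring
    have ha : 0 < A 0 := hA0 ▸ inv_pos.mpr hcx
    have hb : 0 < A 1 := hA1 ▸ inv_pos.mpr hcy
    rw [hcomb]
    rcases lt_or_eq_of_le ht.1 with h0 | h0
    · nlinarith [mul_pos h0 hb, mul_nonneg (sub_nonneg.mpr ht.2) ha.le]
    · rw [← h0]; simpa using ha
  set F : ℝ → ℝ := fun t => fderiv ℝ f (γ' t) d + B / A t with hF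
  set G : ℝ → ℝ := fun t => iteratedFDeriv ℝ 2 f (γ' t) (fun _ => d) - B^2 / (A t)^2 with hG
  have hpd : B = -cx⁻¹ * (inner ℝ (g x) d : ℝ) := by
    simp only [hBdef, hpdef, real_inner_smul_left]
  have hpd' : B = -cy⁻¹ * (inner ℝ (g y) d : ℝ) := by
    simp only [hBdef, hp', real_inner_smul_left]
  have hF0 : F 0 = 0 := by
    have hγ0 : γ' 0 = x := by simp [hγ']
    simp only [hF, hγ0, hA0, hpd, ← hinner]
    field_simp; ring
  have hF1 : F 1 = 0 := by
    have hγ1 : γ' 1 = y := by simp [hγ', hd]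
    simp only [hF, hγ1, hA1, hpd', ← hinner]
    field_simp; ring
  have hf3 := hf.1
  have hfd2 : ContDiffOn ℝ 2 (fderiv ℝ f) U := by
    apply hf3.fderiv_of_isOpen hUopen
    norm_num
  have hFG : ∀ t ∈ Set.Icc (0:ℝ) 1, HasDerivAt F (G t) t := by
    intro t ht
    have hγt : γ' t ∈ U := hγmem t ht
    have hγd : HasDerivAt γ' d t := by
      have : HasDerivAt (fun s : ℝ => s • d) ((1:ℝ) • d) t := (hasDerivAt_id t).smul_const d
      simpa [hγ'] using this.const_add x
    -- derivative of t ↦ fderiv f (γ' t) d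
    have hdiff : DifferentiableAt ℝ (fderiv ℝ f) (γ' t) :=
      (hfd2.differentiableOn (by norm_num)).differentiableAt (hUopen.mem_nhds hγt)
    have h1 : HasDerivAt (fun s => fderiv ℝ f (γ' s))
        (fderiv ℝ (fderiv ℝ f) (γ' t) d) t :=
      hdiff.hasFDerivAt.comp_hasDerivAt t hγd
    have h2 : HasDerivAt (fun s => fderiv ℝ f (γ' s) d)
        (iteratedFDeriv ℝ 2 f (γ' t) (fun _ => d)) t := by
      have := h1.clm_apply (hasDerivAt_const t d)
      simp only [map_zero, add_zero] at this
      have heq : iteratedFDeriv ℝ 2 f (γ' t) (fun _ => d)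
          = fderiv ℝ (fderiv ℝ f) (γ' t) d d := by
        rw [iteratedFDeriv_two_apply]
      rwa [heq]
    -- derivative of t ↦ B / A t
    have hAt : A t ≠ 0 := ne_of_gt (hApos t ht)
    have hAder : HasDerivAt A B t := by
      have : HasDerivAt (fun s : ℝ => s * B) ((1:ℝ) * B) t := (hasDerivAt_id t).mul_const B
      simpa [hAdef] using this.const_add (1 + (inner ℝ p x : ℝ))
    have h3 : HasDerivAt (fun s => B / A s) ((0 * A t - B * B) / (A t)^2) t :=
      (hasDerivAt_const t B).div hAder hAt
    have h4 := h2.add h3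
    have : iteratedFDeriv ℝ 2 f (γ' t) (fun _ => d) + (0 * A t - B * B) / A t ^ 2 = G t := by
      simp only [hG]
      field_simp
      ring
    rwa [this] at h4
  have hGpos : ∀ t ∈ Set.Icc (0:ℝ) 1, F t = 0 → 0 < G t := by
    intro t ht hFt
    have hγt : γ' t ∈ U := hγmem t ht
    have hAt : A t ≠ 0 := ne_of_gt (hApos t ht)
    have hBA : B / A t = -(fderiv ℝ f (γ' t) d) := by
      have := hFt
      simp only [hF] at this
      linarith
    have hsq : B^2 / (A t)^2 = (fderiv ℝ f (γ' t) d)^2 := by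
      rw [← div_pow, hBA]
      ring
    have hpos := hf.2.1 (γ' t) hγt d hdne
    rw [affMetric] at hpos
    simp only [hG, hsq]
    linarith
  exact no_two_crit hFG hF0 hF1 hGpos
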